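/- Let W be a finite Coxeter group whose longest element w₀ is central, and let C be a conjugacy class of involutions in W. Define the W-representation V_C over ℝ with basis {a_w : w ∈ C} where, for s ∈ S and w ∈ C: s·a_w = −a_w if sw = ws and ℓ(sw) < ℓ(w), and s·a_w = a_{sws} otherwise. Let ρ_C be its character. Then ρ_{Cw₀} = ρ_C ⊗ ε, where ε is the sign character of W. -/

import Mathlib

open scoped Classical

namespace KottwitzAux

variable {B W : Type*} [Group W] {M : CoxeterMatrix B} (cs : CoxeterSystem M W)

noncomputable def spf (i : B) : W × ℤˣ → W × ℤˣ :=
  fun p => (cs.simple i * p.1 * cs.simple i, if p.1 = cs.simple i then -p.2 else p.2)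

theorem spf_involutive (i : B) : Function.Involutive (spf cs i) := by
  intro p
  unfold spf
  have h1 : cs.simple i * (cs.simple i * p.1 * cs.simple i) * cs.simple i = p.1 := by
    rw [← mul_assoc, ← mul_assoc, cs.simple_mul_simple_self, one_mul, mul_assoc,
      cs.simple_mul_simple_self, mul_one]
  have h2 : (cs.simple i * p.1 * cs.simple i = cs.simple i) ↔ p.1 = cs.simple i := by
    constructor
    · intro h
      have := congrArg (fun z => cs.simple i * z * cs.simple i) h
      simpa [h1, ← mul_assoc, cs.simple_mul_simple_self] using this
    · rintro h
      rw [h, cs.simple_mul_simple_self, one_mul]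
  simp only [h1, h2]
  by_cases h : p.1 = cs.simple i <;> simp [h]
  · exact Prod.ext (by simp [h]) rfl

noncomputable def sp (i : B) : Equiv.Perm (W × ℤˣ) := (spf_involutive cs i).toPerm

theorem sp_apply (i : B) (p : W × ℤˣ) :
    sp cs i p = (cs.simple i * p.1 * cs.simple i,
      if p.1 = cs.simple i then -p.2 else p.2) := rfl

theorem sp_mul_self (i : B) : sp cs i * sp cs i = 1 := by
  ext p
  · exact congrArg Prod.fst (spf_involutive cs i p)
  · exact congrArg (fun q : W × ℤˣ => (q.2 : ℤ)) (spf_involutive cs i p)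

theorem simple_ne_one (i : B) : cs.simple i ≠ 1 := by
  intro h
  have := cs.length_simple i
  rw [h, cs.length_one] at this
  exact one_ne_zero this.symm

theorem sp_liftable : M.IsLiftable (fun i => sp cs i) := by
  intro i j
  by_cases hs : cs.simple i = cs.simple j
  · have hspeq : sp cs i = sp cs j := by
      apply Equiv.ext
      intro p
      rw [sp_apply, sp_apply, hs]
    have : sp cs i * sp cs j = 1 := by rw [hspeq]; exact sp_mul_self cs j
    simp only [this, one_pow]
  rcases Nat.eq_zero_or_pos (M i j) with hm | hm
  · simp [hm]
  set m := M i j with hmdef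
  set p := cs.simple i * cs.simple j with hpdef
  have hpm : p ^ m = 1 := cs.simple_mul_simple_pow i j
  have hpinv : p⁻¹ = cs.simple j * cs.simple i := by
    rw [hpdef, mul_inv_rev, cs.inv_simple, cs.inv_simple]
  have hpne : p ≠ 1 := by
    intro h
    apply hs
    have : cs.simple i = (cs.simple j)⁻¹ := eq_inv_of_mul_eq_one_left h
    rw [this, cs.inv_simple]
  have hji : cs.simple j * cs.simple i ≠ 1 := by
    intro h
    apply hs
    have := eq_inv_of_mul_eq_one_left h
    rw [cs.inv_simple] at this
    exact this.symm
  have hsij : cs.simple j ≠ cs.simple j * cs.simple i * cs.simple j := by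
    intro h
    apply hpne
    have h1 : cs.simple j * cs.simple j = cs.simple j * (cs.simple j * cs.simple i * cs.simple j) := by
      rw [← h]
    simp only [← mul_assoc, cs.simple_mul_simple_self, one_mul] at h1
    rw [hpdef, ← h1]
  -- action of Q := sp i * sp j
  have hQ : ∀ q : W × ℤˣ, (sp cs i * sp cs j) q =
      (p * q.1 * p⁻¹,
        if q.1 = cs.simple j ∨ q.1 = cs.simple j * cs.simple i * cs.simple j
          then -q.2 else q.2) := by
    intro q
    rw [Equiv.Perm.mul_apply, sp_apply, sp_apply]
    have hfst : cs.simple i * (cs.simple j * q.1 * cs.simple j) * cs.simple i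
        = p * q.1 * p⁻¹ := by
      rw [hpdef, hpinv]; group
    have hcond : (cs.simple j * q.1 * cs.simple j = cs.simple i) ↔
        q.1 = cs.simple j * cs.simple i * cs.simple j := by
      constructor
      · intro h
        have := congrArg (fun z => cs.simple j * z * cs.simple j) h
        simp only [← mul_assoc, cs.simple_mul_simple_self, one_mul] at this
        rw [mul_assoc, cs.simple_mul_simple_self, mul_one] at this
        exact this
      · intro h
        rw [h]
        simp only [← mul_assoc, cs.simple_mul_simple_self, one_mul]
        rw [mul_assoc, cs.simple_mul_simple_self, mul_one]
    rw [Prod.ext_iff]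
    refine ⟨hfst, ?_⟩
    show (if cs.simple j * q.1 * cs.simple j = cs.simple i
        then -(if q.1 = cs.simple j then -q.2 else q.2)
        else (if q.1 = cs.simple j then -q.2 else q.2)) = _
    rw [hcond]
    by_cases hA : q.1 = cs.simple j
    · have hB : ¬ q.1 = cs.simple j * cs.simple i * cs.simple j :=
        fun h => hsij (hA.symm.trans h)
      rw [if_pos hA, if_neg hB, if_pos (Or.inl hA)]
    · by_cases hB : q.1 = cs.simple j * cs.simple i * cs.simple j
      · rw [if_pos hB, if_neg hA, if_pos (Or.inr hB)]
      · rw [if_neg hB, if_neg hA, if_neg (by push_neg; exact ⟨hA, hB⟩)]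
  -- iterate
  set cond : W → ℕ → Prop := fun t l =>
    p ^ l * t * (p ^ l)⁻¹ = cs.simple j ∨
    p ^ l * t * (p ^ l)⁻¹ = cs.simple j * cs.simple i * cs.simple j with hconddef
  have key : ∀ (k : ℕ) (q : W × ℤˣ), ((sp cs i * sp cs j) ^ k) q =
      (p ^ k * q.1 * (p ^ k)⁻¹,
        (-1 : ℤˣ) ^ (((Finset.range k).filter (cond q.1)).card) * q.2) := by
    intro k
    induction k with
    | zero => intro q; simp
    | succ k ih =>
      intro q
      rw [pow_succ', Equiv.Perm.mul_apply, ih q, hQ]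
      have hcnt : ((Finset.range (k+1)).filter (cond q.1)).card =
          ((Finset.range k).filter (cond q.1)).card + (if cond q.1 k then 1 else 0) := by
        rw [Finset.range_add_one, Finset.filter_insert]
        by_cases h : cond q.1 k
        · rw [if_pos h, Finset.card_insert_of_notMem (by simp), if_pos h]
        · rw [if_neg h, if_neg h, add_zero]
      have hfst : p * (p ^ k * q.1 * (p ^ k)⁻¹) * p⁻¹ = p ^ (k+1) * q.1 * (p ^ (k+1))⁻¹ := by
        rw [pow_succ' p k]; group
      rw [Prod.ext_iff]
      refine ⟨hfst, ?_⟩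
      show (if (p ^ k * q.1 * (p ^ k)⁻¹ = cs.simple j ∨
            p ^ k * q.1 * (p ^ k)⁻¹ = cs.simple j * cs.simple i * cs.simple j)
          then -((-1 : ℤˣ) ^ (((Finset.range k).filter (cond q.1)).card) * q.2)
          else ((-1 : ℤˣ) ^ (((Finset.range k).filter (cond q.1)).card) * q.2)) = _
      by_cases h : cond q.1 k
      · rw [if_pos h]
        show -((-1 : ℤˣ) ^ (((Finset.range k).filter (cond q.1)).card) * q.2)
          = (-1 : ℤˣ) ^ (((Finset.range (k+1)).filter (cond q.1)).card) * q.2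
        rw [hcnt, if_pos h, pow_add, pow_one, mul_neg_one, neg_mul]
      · rw [if_neg h]
        show ((-1 : ℤˣ) ^ (((Finset.range k).filter (cond q.1)).card) * q.2)
          = (-1 : ℤˣ) ^ (((Finset.range (k+1)).filter (cond q.1)).card) * q.2
        rw [hcnt, if_neg h, add_zero]
  -- evenness of the count
  have hcomm : ∀ l : ℕ, cs.simple j * p ^ l = (p ^ l)⁻¹ * cs.simple j := by
    intro l
    have h1 : cs.simple j * p * cs.simple j = p⁻¹ := by
      rw [hpinv, hpdef, mul_assoc, mul_assoc, cs.simple_mul_simple_self, mul_one]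
    have h2 : cs.simple j * p ^ l * cs.simple j = (p ^ l)⁻¹ := by
      have h3 : (cs.simple j * p * (cs.simple j)⁻¹) ^ l
          = cs.simple j * p ^ l * (cs.simple j)⁻¹ := conj_pow
      rw [cs.inv_simple] at h3
      rw [← h3, h1, inv_pow]
    have := congrArg (fun z => z * cs.simple j) h2
    simpa only [mul_assoc, cs.simple_mul_simple_self, mul_one] using this
  have heven : ∀ t : W, Even (((Finset.range m).filter (cond t)).card) := by
    intro t
    have hA : ∀ l, (p ^ l * t * (p ^ l)⁻¹ = cs.simple j) ↔ p ^ (2*l) * t = cs.simple j := by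
      intro l
      have hp2 : p ^ (2*l) = p ^ l * p ^ l := by rw [two_mul, pow_add]
      constructor
      · intro h
        have h1 : p ^ l * t = cs.simple j * p ^ l := by
          rw [← h]; group
        rw [hcomm] at h1
        rw [hp2, mul_assoc, h1, mul_inv_cancel_left]
      · intro g
        rw [hp2, mul_assoc] at g
        have h1 : p ^ l * t = (p ^ l)⁻¹ * cs.simple j := by
          rw [← g]; group
        rw [← hcomm] at h1
        rw [mul_inv_eq_iff_eq_mul, h1]
    have hB : ∀ l, (p ^ l * t * (p ^ l)⁻¹ = cs.simple j * cs.simple i * cs.simple j)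
        ↔ p ^ (2*l+1) * t = cs.simple j := by
      intro l
      have hss : cs.simple j * cs.simple i * cs.simple j = p⁻¹ * cs.simple j := by
        rw [hpinv]
      have hp2 : p ^ (2*l+1) = (p ^ (l+1)) * p ^ l := by
        rw [← pow_add]; congr 1; omega
      constructor
      · intro h
        have h1 : p ^ l * t = p⁻¹ * cs.simple j * p ^ l := by
          rw [← hss, ← h]; group
        rw [mul_assoc, hcomm, ← mul_assoc] at h1
        have h2 : p⁻¹ * (p ^ l)⁻¹ = (p ^ (l+1))⁻¹ := by
          rw [← mul_inv_rev, ← pow_succ]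
        rw [h2] at h1
        rw [hp2, mul_assoc, h1, mul_inv_cancel_left]
      · intro g
        rw [hp2, mul_assoc] at g
        have h1 : p ^ l * t = (p ^ (l+1))⁻¹ * cs.simple j := by
          rw [← g]; group
        have h2 : (p ^ (l+1))⁻¹ * cs.simple j = p⁻¹ * ((p ^ l)⁻¹ * cs.simple j) := by
          rw [← mul_assoc, ← mul_inv_rev, ← pow_succ]
        rw [h2, ← hcomm, ← mul_assoc, ← hss] at h1
        rw [mul_inv_eq_iff_eq_mul, h1]
    set F : ℕ → Prop := fun r => p ^ r * t = cs.simple j with hFdef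
    have hsplit : ((Finset.range m).filter (cond t)).card =
        ((Finset.range m).filter (fun l => F (2*l))).card
          + ((Finset.range m).filter (fun l => F (2*l+1))).card := by
      have e1 : (Finset.range m).filter (cond t)
          = (Finset.range m).filter (fun l => F (2*l) ∨ F (2*l+1)) := by
        apply Finset.filter_congr
        intro l _
        rw [hconddef]
        simp only [hA l, hB l, hFdef]
      rw [e1, Finset.filter_or]
      apply Finset.card_union_of_disjoint
      rw [Finset.disjoint_left]
      intro a ha hb
      rw [Finset.mem_filter] at ha hb
      apply hpne
      have h1 : p ^ (2*a) * t = p ^ (2*a+1) * t := ha.2.trans hb.2.symm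
      have h2 : p ^ (2*a) = p ^ (2*a+1) := mul_right_cancel h1
      have h4 := congrArg (fun z => (p ^ (2*a))⁻¹ * z) h2
      have h3 : (1:W) = p := by simpa [pow_succ, ← mul_assoc] using h4
      exact h3.symm
    have hdouble : ∀ (S2 : Finset ℕ), S2 = (Finset.range (2*m)).filter F →
        S2.card = 2 * ((Finset.range m).filter F).card := by
      intro S2 hS2
      have e2 : S2 = ((Finset.range m).filter F)
          ∪ ((Finset.range m).filter F).image (fun l => l + m) := by
        rw [hS2]
        ext r
        simp only [Finset.mem_filter, Finset.mem_union, Finset.mem_image, Finset.mem_range]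
        constructor
        · rintro ⟨hr, hF⟩
          by_cases hrm : r < m
          · exact Or.inl ⟨hrm, hF⟩
          · refine Or.inr ⟨r - m, ⟨by omega, ?_⟩, by omega⟩
            show p ^ (r - m) * t = cs.simple j
            have hr2 : p ^ r = p ^ (r - m) := by
              have hrr : r = (r - m) + m := by omega
              calc p ^ r = p ^ ((r - m) + m) := by rw [← hrr]
                _ = p ^ (r - m) := by rw [pow_add, hpm, mul_one]
            rw [← hr2]; exact hF
        · rintro (⟨hr, hF⟩ | ⟨l, ⟨hl, hF⟩, rfl⟩)
          · exact ⟨by omega, hF⟩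
          · refine ⟨by omega, ?_⟩
            show p ^ (l + m) * t = cs.simple j
            rw [pow_add, hpm, mul_one]; exact hF
      rw [e2, Finset.card_union_of_disjoint, Finset.card_image_of_injective _
        (add_left_injective m), two_mul]
      rw [Finset.disjoint_left]
      intro a ha hb
      rw [Finset.mem_filter, Finset.mem_range] at ha
      rw [Finset.mem_image] at hb
      obtain ⟨l, hl, rfl⟩ := hb
      omega
    -- identify the two even/odd pieces with pieces of range (2*m)
    have hevenpart : ((Finset.range m).filter (fun l => F (2*l))).card
        = (((Finset.range (2*m)).filter F).filter (fun r => r % 2 = 0)).card := by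
      apply Finset.card_bij (fun l _ => 2 * l)
      · intro l hl
        rw [Finset.mem_filter] at hl ⊢
        rw [Finset.mem_filter, Finset.mem_range]
        rw [Finset.mem_range] at hl
        exact ⟨⟨by omega, hl.2⟩, by omega⟩
      · intro a ha b hb hab
        omega
      · intro r hr
        rw [Finset.mem_filter, Finset.mem_filter, Finset.mem_range] at hr
        refine ⟨r / 2, ?_, by omega⟩
        rw [Finset.mem_filter, Finset.mem_range]
        constructor
        · omega
        · show F (2 * (r / 2))
          have : 2 * (r / 2) = r := by omega
          rw [this]; exact hr.1.2
    have hoddpart : ((Finset.range m).filter (fun l => F (2*l+1))).card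
        = (((Finset.range (2*m)).filter F).filter (fun r => r % 2 = 1)).card := by
      apply Finset.card_bij (fun l _ => 2 * l + 1)
      · intro l hl
        rw [Finset.mem_filter] at hl ⊢
        rw [Finset.mem_filter, Finset.mem_range]
        rw [Finset.mem_range] at hl
        exact ⟨⟨by omega, hl.2⟩, by omega⟩
      · intro a ha b hb hab
        omega
      · intro r hr
        rw [Finset.mem_filter, Finset.mem_filter, Finset.mem_range] at hr
        refine ⟨r / 2, ?_, by omega⟩
        rw [Finset.mem_filter, Finset.mem_range]
        constructor
        · omega
        · show F (2 * (r / 2) + 1)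
          have : 2 * (r / 2) + 1 = r := by omega
          rw [this]; exact hr.1.2
    have hparts : (((Finset.range (2*m)).filter F).filter (fun r => r % 2 = 0)).card
        + (((Finset.range (2*m)).filter F).filter (fun r => r % 2 = 1)).card
        = ((Finset.range (2*m)).filter F).card := by
      rw [← Finset.card_union_of_disjoint]
      · congr 1
        ext r
        simp only [Finset.mem_union, Finset.mem_filter]
        constructor
        · rintro (⟨h, _⟩ | ⟨h, _⟩) <;> exact h
        · intro h
          rcases Nat.even_or_odd r with he | ho
          · exact Or.inl ⟨h, Nat.even_iff.mp he⟩
          · exact Or.inr ⟨h, Nat.odd_iff.mp ho⟩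
      · rw [Finset.disjoint_left]
        intro a ha hb
        rw [Finset.mem_filter] at ha hb
        omega
    rw [hsplit, hevenpart, hoddpart, hparts, hdouble _ rfl]
    exact even_two_mul _
  -- conclude
  show ((sp cs i * sp cs j) ^ m) = 1
  apply Equiv.ext
  intro q
  rw [key m q, hpm]
  obtain ⟨c, hc⟩ := heven q.1
  rw [hc, ← two_mul, pow_mul, neg_one_sq, one_pow, one_mul]
  simp

noncomputable def P : W →* Equiv.Perm (W × ℤˣ) := cs.lift ⟨fun i => sp cs i, sp_liftable cs⟩

theorem P_simple (i : B) : P cs (cs.simple i) = sp cs i :=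
  cs.lift_apply_simple (sp_liftable cs) i

noncomputable def mu (w t : W) : ℤˣ := ((P cs w) (t, 1)).2

theorem zu_eq {a b : ℤˣ} (h : a * b = 1) : a = b := by
  have hb : b * b = 1 := Int.units_mul_self b
  calc a = a * (b * b) := by rw [hb, mul_one]
    _ = (a * b) * b := by rw [mul_assoc]
    _ = b := by rw [h, one_mul]

theorem P_apply (w : W) : ∀ t ε, (P cs w) (t, ε) = (w * t * w⁻¹, ε * mu cs w t) := by
  refine cs.simple_induction (p := fun w => ∀ t ε,
    (P cs w) (t, ε) = (w * t * w⁻¹, ε * mu cs w t)) w ?_ ?_ ?_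
  · intro i t ε
    rw [P_simple, sp_apply]
    unfold mu
    rw [P_simple, sp_apply]
    rw [Prod.ext_iff]
    constructor
    · show cs.simple i * t * cs.simple i = cs.simple i * t * (cs.simple i)⁻¹
      rw [cs.inv_simple]
    · show (if t = cs.simple i then -ε else ε)
        = ε * (if t = cs.simple i then -(1:ℤˣ) else 1)
      by_cases h : t = cs.simple i
      · rw [if_pos h, if_pos h, mul_neg_one]
      · rw [if_neg h, if_neg h, mul_one]
  · intro t ε
    unfold mu
    rw [map_one]
    simp
  · intro w1 w2 ih1 ih2 t ε
    have e : ∀ δ : ℤˣ, (P cs (w1*w2)) (t, δ) =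
        (w1*w2*t*(w1*w2)⁻¹, δ * (mu cs w2 t * mu cs w1 (w2*t*w2⁻¹))) := by
      intro δ
      rw [map_mul, Equiv.Perm.mul_apply, ih2 t δ, ih1 (w2*t*w2⁻¹) (δ * mu cs w2 t)]
      rw [Prod.ext_iff]
      constructor
      · show w1 * (w2*t*w2⁻¹) * w1⁻¹ = w1*w2*t*(w1*w2)⁻¹
        rw [mul_inv_rev]; group
      · show δ * mu cs w2 t * mu cs w1 (w2*t*w2⁻¹) = _
        rw [mul_assoc]
    rw [e ε]
    have h2 : mu cs (w1*w2) t = mu cs w2 t * mu cs w1 (w2*t*w2⁻¹) := by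
      have h3 := congrArg Prod.snd (e 1)
      simpa [mu] using h3
    rw [h2]

theorem mu_mul (u v t : W) : mu cs (u*v) t = mu cs u (v*t*v⁻¹) * mu cs v t := by
  have h1 : (P cs (u*v)) (t,1) = ((u*v)*t*(u*v)⁻¹, 1 * mu cs (u*v) t) := P_apply cs (u*v) t 1
  have h2 : (P cs (u*v)) (t,1) = (u*(v*t*v⁻¹)*u⁻¹, (1 * mu cs v t) * mu cs u (v*t*v⁻¹)) := by
    rw [map_mul, Equiv.Perm.mul_apply, P_apply cs v t 1, P_apply cs u (v*t*v⁻¹) (1 * mu cs v t)]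
  have h4 := congrArg Prod.snd (h1.symm.trans h2)
  simp only [one_mul] at h4
  rw [h4, mul_comm]

theorem mu_simple (i : B) (t : W) :
    mu cs (cs.simple i) t = if t = cs.simple i then -1 else 1 := by
  unfold mu
  rw [P_simple, sp_apply]

theorem mu_one (t : W) : mu cs 1 t = 1 := by
  unfold mu
  rw [map_one]
  rfl

theorem mu_inv_conj (w t : W) : mu cs w⁻¹ (w * t * w⁻¹) = mu cs w t := by
  have h := mu_mul cs w⁻¹ w t
  rw [inv_mul_cancel, mu_one] at h
  exact (zu_eq h.symm)

theorem mu_reflection_self {t : W} (ht : cs.IsReflection t) : mu cs t t = -1 := by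
  obtain ⟨w, i, rfl⟩ := ht
  have h1 : mu cs ((w * cs.simple i) * w⁻¹) (w * cs.simple i * w⁻¹)
      = mu cs (w * cs.simple i) (w⁻¹ * (w * cs.simple i * w⁻¹) * (w⁻¹)⁻¹)
        * mu cs w⁻¹ (w * cs.simple i * w⁻¹) := mu_mul cs _ _ _
  have h2 : w⁻¹ * (w * cs.simple i * w⁻¹) * (w⁻¹)⁻¹ = cs.simple i := by group
  have h3 : mu cs w⁻¹ (w * cs.simple i * w⁻¹) = mu cs w (cs.simple i) := mu_inv_conj cs w _
  have h4 : mu cs (w * cs.simple i) (cs.simple i)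
      = mu cs w (cs.simple i * cs.simple i * (cs.simple i)⁻¹) * mu cs (cs.simple i) (cs.simple i) :=
    mu_mul cs w (cs.simple i) (cs.simple i)
  have h5 : cs.simple i * cs.simple i * (cs.simple i)⁻¹ = cs.simple i := by group
  rw [h2, h3, h4, h5, mu_simple, if_pos rfl, mul_neg_one] at h1
  rw [h1]
  have := Int.units_mul_self (mu cs w (cs.simple i))
  rw [neg_mul, this]

theorem mu_wordProd (ω : List B) (t : W) :
    mu cs (cs.wordProd ω) t = (-1) ^ (List.count t (cs.rightInvSeq ω)) := by
  induction ω with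
  | nil =>
    rw [cs.wordProd_nil]
    simp [mu_one]
  | cons i ω ih =>
    rw [cs.wordProd_cons, mu_mul, ih, mu_simple]
    have hris : cs.rightInvSeq (i :: ω)
        = ((cs.wordProd ω)⁻¹ * cs.simple i * cs.wordProd ω) :: cs.rightInvSeq ω := rfl
    rw [hris, List.count_cons]
    simp only [beq_iff_eq]
    have hcond : ((cs.wordProd ω)⁻¹ * cs.simple i * cs.wordProd ω = t)
        ↔ cs.wordProd ω * t * (cs.wordProd ω)⁻¹ = cs.simple i := by
      constructor
      · intro h; rw [← h]; group
      · intro h; rw [← h]; group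
    by_cases h : cs.wordProd ω * t * (cs.wordProd ω)⁻¹ = cs.simple i
    · rw [if_pos h, if_pos (hcond.mpr h), pow_add, pow_one, mul_comm]
    · rw [if_neg h, if_neg (fun hh => h (hcond.mp hh)), add_zero, one_mul]

theorem mu_neg_of_lt {t : W} (ht : cs.IsReflection t) {w : W}
    (hlt : cs.length (w * t) < cs.length w) : mu cs w t = -1 := by
  rcases Int.units_eq_one_or (mu cs w t) with h | h
  · exfalso
    have h1 : mu cs (w * t) t = -1 := by
      have := mu_mul cs w t t
      have h2 : t * t * t⁻¹ = t := by rw [ht.mul_self, one_mul, ht.inv]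
      rw [h2, mu_reflection_self cs ht, h, mul_neg_one] at this
      rw [this]
    obtain ⟨ω, hred, heq⟩ := cs.exists_reduced_word' (w * t)
    rw [heq] at h1
    rw [mu_wordProd] at h1
    have hmem : t ∈ cs.rightInvSeq ω := by
      by_contra hmem
      rw [List.count_eq_zero_of_not_mem hmem, pow_zero] at h1
      exact (by decide : ((1 : ℤˣ) ≠ -1)) h1
    have := cs.isRightInversion_of_mem_rightInvSeq hred hmem
    rw [← heq] at this
    have h3 : cs.length (w * t * t) < cs.length (w * t) := this.2
    rw [mul_assoc, ht.mul_self, mul_one] at h3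
    omega
  · exact h

section Finite
variable [Fintype W]

noncomputable def NSet (w : W) : Finset W :=
  Finset.univ.filter (fun t => mu cs w t = -1)

theorem mem_NSet {w t : W} : t ∈ NSet cs w ↔ mu cs w t = -1 := by
  unfold NSet
  rw [Finset.mem_filter]
  simp

theorem card_NSet (w : W) : (NSet cs w).card = cs.length w := by
  obtain ⟨ω, hred, heq⟩ := cs.exists_reduced_word' w
  have hN : NSet cs w = (cs.rightInvSeq ω).toFinset := by
    ext t
    simp only [NSet, Finset.mem_filter, Finset.mem_univ, true_and, List.mem_toFinset]
    rw [heq, mu_wordProd]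
    constructor
    · intro h
      by_contra hmem
      rw [List.count_eq_zero_of_not_mem hmem, pow_zero] at h
      exact (by decide : ((1:ℤˣ) ≠ -1)) h
    · intro hmem
      rw [List.count_eq_one_of_mem hred.nodup_rightInvSeq hmem, pow_one]
  rw [hN, List.toFinset_card_of_nodup hred.nodup_rightInvSeq, cs.length_rightInvSeq,
    ← hred, ← heq]

theorem mu_eq_one_of_not_reflection {t : W} (hr : ¬ cs.IsReflection t) (w : W) :
    mu cs w t = 1 := by
  rcases Int.units_eq_one_or (mu cs w t) with h | h
  · exact h
  · exfalso
    obtain ⟨ω, hred, heq⟩ := cs.exists_reduced_word' w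
    rw [heq, mu_wordProd] at h
    have hmem : t ∈ cs.rightInvSeq ω := by
      by_contra hmem
      rw [List.count_eq_zero_of_not_mem hmem, pow_zero] at h
      exact (by decide : ((1:ℤˣ) ≠ -1)) h
    exact hr (cs.isReflection_of_mem_rightInvSeq ω hmem)

/-- F1: multiplying by a central element of maximal length reverses lengths. -/
theorem length_mul_max_central (w0 : W) (hmax : ∀ u : W, cs.length u ≤ cs.length w0)
    (hcentral : ∀ u : W, u * w0 = w0 * u) (u : W) :
    cs.length (u * w0) = cs.length w0 - cs.length u := by
  classical
  set R : Finset W := Finset.univ.filter (fun t => cs.IsReflection t) with hR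
  have hrefl : ∀ t : W, cs.IsReflection t → mu cs w0 t = -1 := by
    intro t ht
    apply mu_neg_of_lt cs ht
    exact lt_of_le_of_ne (hmax (w0 * t)) (ht.length_mul_left_ne w0)
  have hNw0 : NSet cs w0 = R := by
    ext t
    simp only [NSet, hR, Finset.mem_filter, Finset.mem_univ, true_and]
    constructor
    · intro h
      by_contra hr
      rw [mu_eq_one_of_not_reflection cs hr w0] at h
      exact (by decide : ((1:ℤˣ) ≠ -1)) h
    · exact hrefl t
  have hsub : ∀ v : W, NSet cs v ⊆ R := by
    intro v t ht
    simp only [NSet, Finset.mem_filter, Finset.mem_univ, true_and] at ht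
    simp only [hR, Finset.mem_filter, Finset.mem_univ, true_and]
    by_contra hr
    rw [mu_eq_one_of_not_reflection cs hr v] at ht
    exact (by decide : ((1:ℤˣ) ≠ -1)) ht
  have hN : NSet cs (u * w0) = R \ NSet cs u := by
    ext t
    simp only [NSet, Finset.mem_filter, Finset.mem_univ, true_and, Finset.mem_sdiff]
    have hconj : w0 * t * w0⁻¹ = t := by
      rw [← hcentral t, mul_assoc, mul_inv_cancel, mul_one]
    rw [mu_mul, hconj]
    by_cases hr : cs.IsReflection t
    · rw [hrefl t hr, mul_neg_one]
      constructor
      · intro h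
        refine ⟨by rw [hR]; exact Finset.mem_filter.mpr ⟨Finset.mem_univ t, hr⟩, ?_⟩
        intro hmu
        rw [hmu] at h
        exact (by decide : (-(-1:ℤˣ) ≠ -1)) h
      · rintro ⟨-, hnot⟩
        rcases Int.units_eq_one_or (mu cs u t) with h1 | h1
        · rw [h1]
        · exact absurd h1 hnot
    · rw [mu_eq_one_of_not_reflection cs hr u, mu_eq_one_of_not_reflection cs hr w0, mul_one]
      constructor
      · intro h; exact absurd h (by decide)
      · rintro ⟨hmem, -⟩
        rw [hR] at hmem
        exact absurd (Finset.mem_filter.mp hmem).2 hr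
  have hcardR : R.card = cs.length w0 := by rw [← hNw0, card_NSet]
  have h1 : cs.length (u * w0) = R.card - (NSet cs u).card := by
    rw [← card_NSet cs (u * w0), hN, Finset.card_sdiff_of_subset (hsub u)]
  rw [h1, hcardR, card_NSet]

/-- F2: conjugating an involution by a non-commuting simple reflection changes
the length by exactly two. -/
theorem length_conj_involution (x : W) (hx : x * x = 1) (i : B)
    (hcomm : cs.simple i * x ≠ x * cs.simple i) :
    cs.length (cs.simple i * x * cs.simple i) = cs.length x + 2 ∨
      cs.length x = cs.length (cs.simple i * x * cs.simple i) + 2 := by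
  classical
  have hxinv : x⁻¹ = x := by
    rw [← mul_one x⁻¹, ← hx, ← mul_assoc, inv_mul_cancel, one_mul]
  have hmuinvconj : ∀ t : W, mu cs x (x * t * x) = mu cs x t := by
    intro t
    have h := mu_mul cs x x t
    rw [hx, mu_one] at h
    have h2 := zu_eq h.symm
    rw [hxinv] at h2
    exact h2
  have hxsx_ne : x * cs.simple i * x ≠ cs.simple i := by
    intro h
    apply hcomm
    have h1 : x * (x * cs.simple i * x) = x * cs.simple i := by rw [h]
    rw [← mul_assoc, ← mul_assoc, hx, one_mul] at h1
    exact h1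
  have hredx : ∀ t : W, x * (x * t * x) * x = t := by
    intro t
    simp only [← mul_assoc]
    rw [hx, one_mul, mul_assoc, hx, mul_one]
  have hcA : ∀ t : W, (x * t * x = cs.simple i) ↔ t = x * cs.simple i * x := by
    intro t
    constructor
    · intro h
      have h2 := congrArg (fun z => x * z * x) h
      rw [hredx t] at h2
      exact h2
    · intro h
      rw [h, hredx]
  have hcB : ∀ t : W, (cs.simple i * t * cs.simple i = cs.simple i) ↔ t = cs.simple i := by
    intro t
    constructor
    · intro h
      have h2 := congrArg (fun z => cs.simple i * z * cs.simple i) h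
      rw [mul_assoc (cs.simple i) t (cs.simple i), cs.simple_mul_simple_cancel_left,
        cs.simple_mul_simple_cancel_right] at h2
      rw [cs.simple_mul_simple_self, one_mul] at h2
      exact h2
    · intro h
      rw [h, cs.simple_mul_simple_self, one_mul]
  have key : ∀ t : W, mu cs (cs.simple i * x * cs.simple i) (cs.simple i * t * cs.simple i)
      = (if t = x * cs.simple i * x then -1 else 1)
        * (if t = cs.simple i then -1 else 1) * mu cs x t := by
    intro t
    have e1 : cs.simple i * (cs.simple i * t * cs.simple i) * (cs.simple i)⁻¹ = t := by
      rw [cs.inv_simple, mul_assoc (cs.simple i) t (cs.simple i),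
        cs.simple_mul_simple_cancel_left, cs.simple_mul_simple_cancel_right]
    have e2 := mu_mul cs (cs.simple i * x) (cs.simple i) (cs.simple i * t * cs.simple i)
    rw [e1] at e2
    have e3 := mu_mul cs (cs.simple i) x t
    rw [hxinv] at e3
    have e4 : mu cs (cs.simple i) (cs.simple i * t * cs.simple i)
        = (if t = cs.simple i then -1 else 1) := by
      rw [mu_simple]
      by_cases h : t = cs.simple i
      · rw [if_pos (hcB t |>.mpr h), if_pos h]
      · rw [if_neg (fun hh => h ((hcB t).mp hh)), if_neg h]
    have e5 : mu cs (cs.simple i) (x * t * x)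
        = (if t = x * cs.simple i * x then -1 else 1) := by
      rw [mu_simple]
      by_cases h : t = x * cs.simple i * x
      · rw [if_pos ((hcA t).mpr h), if_pos h]
      · rw [if_neg (fun hh => h ((hcA t).mp hh)), if_neg h]
    rw [e3, e5] at e2
    rw [e4] at e2
    rw [e2, mul_right_comm]
  -- the set `A` of `t` with `mu y (s t s) = -1`, in bijection with `NSet y`
  set A : Finset W := Finset.univ.filter
    (fun t => mu cs (cs.simple i * x * cs.simple i) (cs.simple i * t * cs.simple i) = -1)
    with hAdef
  have hmemA : ∀ t : W, t ∈ A ↔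
      mu cs (cs.simple i * x * cs.simple i) (cs.simple i * t * cs.simple i) = -1 := by
    intro t
    rw [hAdef, Finset.mem_filter]
    simp
  have hcardA : A.card = (NSet cs (cs.simple i * x * cs.simple i)).card := by
    apply Finset.card_bij (fun t _ => cs.simple i * t * cs.simple i)
    · intro t ht
      rw [mem_NSet]
      exact (hmemA t).mp ht
    · intro a ha b hb hab
      have h2 := congrArg (fun z => cs.simple i * z * cs.simple i) hab
      rw [mul_assoc (cs.simple i) a (cs.simple i), cs.simple_mul_simple_cancel_left,
        cs.simple_mul_simple_cancel_right] at h2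
      rw [mul_assoc (cs.simple i) b (cs.simple i), cs.simple_mul_simple_cancel_left,
        cs.simple_mul_simple_cancel_right] at h2
      exact h2
    · intro r hr
      refine ⟨cs.simple i * r * cs.simple i, ?_, ?_⟩
      · rw [hmemA]
        rw [mul_assoc (cs.simple i) r (cs.simple i), cs.simple_mul_simple_cancel_left,
          cs.simple_mul_simple_cancel_right]
        rw [mem_NSet] at hr
        exact hr
      · rw [mul_assoc (cs.simple i) r (cs.simple i), cs.simple_mul_simple_cancel_left,
        cs.simple_mul_simple_cancel_right]
  have hsne : cs.simple i ≠ x * cs.simple i * x := fun h => hxsx_ne h.symm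
  have hmusx2 : mu cs x (x * cs.simple i * x) = mu cs x (cs.simple i) :=
    hmuinvconj (cs.simple i)
  rcases Int.units_eq_one_or (mu cs x (cs.simple i)) with hmus | hmus
  · -- both outside `NSet x` : lengths go up by 2
    left
    have hA : A = NSet cs x ∪ {cs.simple i, x * cs.simple i * x} := by
      ext t
      rw [hmemA, key, Finset.mem_union, mem_NSet, Finset.mem_insert, Finset.mem_singleton]
      by_cases h1 : t = cs.simple i
      · have h2 : ¬ t = x * cs.simple i * x := fun hh => hsne (h1 ▸ hh)
        rw [if_neg h2, if_pos h1, h1, hmus]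
        constructor
        · intro _; right; left; rfl
        · intro _; decide
      · by_cases h2 : t = x * cs.simple i * x
        · rw [if_pos h2, if_neg h1, h2, hmusx2, hmus]
          constructor
          · intro _; right; right; rfl
          · intro _; decide
        · rw [if_neg h2, if_neg h1, one_mul, one_mul]
          constructor
          · intro h; exact Or.inl h
          · rintro (h | h | h)
            · exact h
            · exact absurd h h1
            · exact absurd h h2
    have hdisj : Disjoint (NSet cs x) ({cs.simple i, x * cs.simple i * x} : Finset W) := by
      rw [Finset.disjoint_right]
      intro a ha hmem
      rw [Finset.mem_insert, Finset.mem_singleton] at ha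
      rw [mem_NSet] at hmem
      rcases ha with rfl | rfl
      · rw [hmus] at hmem; exact (by decide : ((1:ℤˣ) ≠ -1)) hmem
      · rw [hmusx2, hmus] at hmem; exact (by decide : ((1:ℤˣ) ≠ -1)) hmem
    have hcard2 : ({cs.simple i, x * cs.simple i * x} : Finset W).card = 2 :=
      Finset.card_pair hsne
    have := card_NSet cs (cs.simple i * x * cs.simple i)
    rw [← hcardA, hA, Finset.card_union_of_disjoint hdisj, hcard2, card_NSet] at this
    omega
  · -- both inside `NSet x` : lengths go down by 2
    right
    have hsub2 : ({cs.simple i, x * cs.simple i * x} : Finset W) ⊆ NSet cs x := by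
      intro a ha
      rw [Finset.mem_insert, Finset.mem_singleton] at ha
      rw [mem_NSet]
      rcases ha with rfl | rfl
      · exact hmus
      · rw [hmusx2]; exact hmus
    have hA : A = NSet cs x \ {cs.simple i, x * cs.simple i * x} := by
      ext t
      rw [hmemA, key, Finset.mem_sdiff, mem_NSet, Finset.mem_insert, Finset.mem_singleton]
      by_cases h1 : t = cs.simple i
      · have h2 : ¬ t = x * cs.simple i * x := fun hh => hsne (h1 ▸ hh)
        rw [if_neg h2, if_pos h1, h1, hmus]
        constructor
        · intro h
          exact absurd h (by decide)
        · rintro ⟨-, hno⟩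
          exact absurd (Or.inl rfl) hno
      · by_cases h2 : t = x * cs.simple i * x
        · rw [if_pos h2, if_neg h1, h2, hmusx2, hmus]
          constructor
          · intro h
            exact absurd h (by decide)
          · rintro ⟨-, hno⟩
            exact absurd (Or.inr rfl) hno
        · rw [if_neg h2, if_neg h1, one_mul, one_mul]
          constructor
          · intro h
            refine ⟨h, ?_⟩
            rintro (hh | hh)
            · exact h1 hh
            · exact h2 hh
          · rintro ⟨h, -⟩
            exact h
    have hcard2 : ({cs.simple i, x * cs.simple i * x} : Finset W).card = 2 :=
      Finset.card_pair hsne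
    have hle := Finset.card_le_card hsub2
    have := card_NSet cs (cs.simple i * x * cs.simple i)
    rw [← hcardA, hA, Finset.card_sdiff_of_subset hsub2, hcard2, card_NSet] at this
    rw [hcard2, card_NSet] at hle
    omega
end Finite

end KottwitzAux

/-- Let `W` be a finite Coxeter group whose longest element `w₀` is central, and let
`C` be a conjugacy class of involutions in `W`.  Let `V_C` be the Lusztig–Vogan
`W`-representation over `ℝ` with basis `{a_w : w ∈ C}`, where for a simple reflection
`s` and `w ∈ C` we have `s · a_w = −a_w` if `sw = ws` and `ℓ(sw) < ℓ(w)`, and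
`s · a_w = a_{sws}` otherwise; let `ρ_C` be its character.  Then
`ρ_{C w₀} = ρ_C ⊗ ε`, where `ε` is the sign character of `W`. -/
theorem kottwitz_character_mul_longest_element
    {B W : Type*} [Group W] [Fintype W] {M : CoxeterMatrix B} (cs : CoxeterSystem M W)
    (w0 : W) (hw0max : ∀ u : W, cs.length u ≤ cs.length w0)
    (hw0c : ∀ u : W, u * w0 = w0 * u)
    (C C' : Finset W)
    (hCinv : ∀ w ∈ C, w * w = 1)
    (hCcl : ∃ x : W, ∀ y : W, y ∈ C ↔ IsConj x y)
    (hCconj : ∀ w ∈ C, ∀ x : W, x * w * x⁻¹ ∈ C)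
    (hC' : ∀ y : W, y ∈ C' ↔ ∃ x ∈ C, y = x * w0)
    (hC'conj : ∀ w ∈ C', ∀ x : W, x * w * x⁻¹ ∈ C')
    (π : Representation ℝ W ({x // x ∈ C} → ℝ))
    (π' : Representation ℝ W ({x // x ∈ C'} → ℝ))
    (hπ : ∀ (i : B) (w : {x // x ∈ C}),
      π (cs.simple i) (Pi.single w 1) =
        if cs.simple i * w.1 = w.1 * cs.simple i ∧
            cs.length (cs.simple i * w.1) < cs.length w.1
        then -(Pi.single w 1)
        else Pi.single
          ⟨cs.simple i * w.1 * cs.simple i, by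
            have := hCconj w.1 w.2 (cs.simple i)
            rwa [cs.inv_simple] at this⟩ 1)
    (hπ' : ∀ (i : B) (w : {x // x ∈ C'}),
      π' (cs.simple i) (Pi.single w 1) =
        if cs.simple i * w.1 = w.1 * cs.simple i ∧
            cs.length (cs.simple i * w.1) < cs.length w.1
        then -(Pi.single w 1)
        else Pi.single
          ⟨cs.simple i * w.1 * cs.simple i, by
            have := hC'conj w.1 w.2 (cs.simple i)
            rwa [cs.inv_simple] at this⟩ 1) :
    ∀ g : W, LinearMap.trace ℝ _ (π' g) =
      (-1 : ℝ) ^ cs.length g * LinearMap.trace ℝ _ (π g) := by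

  classical
  have hF1 : ∀ u : W, cs.length (u * w0) = cs.length w0 - cs.length u :=
    KottwitzAux.length_mul_max_central cs w0 hw0max hw0c
  have hC'mem : ∀ y : W, y ∈ C' → y * w0⁻¹ ∈ C := by
    intro y hy
    obtain ⟨x, hx, rfl⟩ := (hC' y).mp hy
    simpa using hx
  have hCmem' : ∀ x : W, x ∈ C → x * w0 ∈ C' := fun x hx => (hC' _).mpr ⟨x, hx, rfl⟩
  have hcsq : ∀ u : W, ((-1:ℝ) ^ (cs.length u / 2)) * ((-1:ℝ) ^ (cs.length u / 2)) = 1 := by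
    intro u
    rw [← pow_add]
    exact Even.neg_one_pow ⟨cs.length u / 2, rfl⟩
  have hflip : ∀ a b : ℕ, (a = b + 2 ∨ b = a + 2) →
      ((-1:ℝ)) ^ (a / 2) = -((-1:ℝ)) ^ (b / 2) := by
    intro a b h
    rcases h with h | h
    · rw [h]
      have h2 : (b+2)/2 = b/2 + 1 := by omega
      rw [h2, pow_succ, mul_neg_one]
    · rw [h]
      have h2 : (a+2)/2 = a/2 + 1 := by omega
      rw [h2, pow_succ, mul_neg_one, neg_neg]
  -- the intertwining maps
  set T : ({x // x ∈ C} → ℝ) →ₗ[ℝ] ({y // y ∈ C'} → ℝ) :=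
    { toFun := fun f y => ((-1:ℝ) ^ (cs.length (y.1 * w0⁻¹) / 2))
        * f ⟨y.1 * w0⁻¹, hC'mem y.1 y.2⟩
      map_add' := by intro f g; funext y; simp [mul_add]
      map_smul' := by intro r f; funext y; simp; ring } with hTdef
  set S : ({y // y ∈ C'} → ℝ) →ₗ[ℝ] ({x // x ∈ C} → ℝ) :=
    { toFun := fun f x => ((-1:ℝ) ^ (cs.length x.1 / 2)) * f ⟨x.1 * w0, hCmem' x.1 x.2⟩
      map_add' := by intro f g; funext x; simp [mul_add]
      map_smul' := by intro r f; funext x; simp; ring } with hSdef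
  have hTapp : ∀ (f : {x // x ∈ C} → ℝ) (y : {y // y ∈ C'}),
      T f y = ((-1:ℝ) ^ (cs.length (y.1 * w0⁻¹) / 2)) * f ⟨y.1 * w0⁻¹, hC'mem y.1 y.2⟩ :=
    fun f y => rfl
  have hSapp : ∀ (f : {y // y ∈ C'} → ℝ) (x : {x // x ∈ C}),
      S f x = ((-1:ℝ) ^ (cs.length x.1 / 2)) * f ⟨x.1 * w0, hCmem' x.1 x.2⟩ :=
    fun f x => rfl
  have happC : ∀ (f : {x // x ∈ C} → ℝ) (a b : W) (ha : a ∈ C) (hb : b ∈ C), a = b →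
      f ⟨a, ha⟩ = f ⟨b, hb⟩ := by
    rintro f a b ha hb rfl; rfl
  have hST : S ∘ₗ T = LinearMap.id := by
    apply LinearMap.ext
    intro f
    funext x
    rw [LinearMap.comp_apply, LinearMap.id_apply, hSapp, hTapp]
    have h1 : (x.1 * w0) * w0⁻¹ = x.1 := by group
    rw [happC f _ _ _ x.2 h1]
    have h2 : cs.length ((x.1 * w0) * w0⁻¹) = cs.length x.1 := by rw [h1]
    rw [h2, ← mul_assoc, hcsq, one_mul]
  have hTS : T ∘ₗ S = LinearMap.id := by
    apply LinearMap.ext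
    intro f
    funext y
    rw [LinearMap.comp_apply, LinearMap.id_apply, hTapp, hSapp]
    have h1 : (y.1 * w0⁻¹) * w0 = y.1 := by group
    have happC' : ∀ (a b : W) (ha : a ∈ C') (hb : b ∈ C'), a = b →
        f ⟨a, ha⟩ = f ⟨b, hb⟩ := by rintro a b ha hb rfl; rfl
    rw [happC' _ _ _ y.2 h1, ← mul_assoc, hcsq, one_mul]
  -- key intertwining at simple reflections
  have hsingle : ∀ (x : {x // x ∈ C}), T (Pi.single x 1)
      = ((-1:ℝ) ^ (cs.length x.1 / 2)) •
          (Pi.single (⟨x.1 * w0, hCmem' x.1 x.2⟩ : {y // y ∈ C'}) 1 : {y // y ∈ C'} → ℝ) := by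
    intro x
    funext z
    rw [hTapp]
    rw [Pi.smul_apply, Pi.single_apply, Pi.single_apply, smul_eq_mul]
    by_cases h : z.1 = x.1 * w0
    · have h1 : z.1 * w0⁻¹ = x.1 := by rw [h]; group
      have h2 : (⟨z.1 * w0⁻¹, hC'mem z.1 z.2⟩ : {x // x ∈ C}) = x := Subtype.ext h1
      have h3 : z = (⟨x.1 * w0, hCmem' x.1 x.2⟩ : {y // y ∈ C'}) := Subtype.ext h
      rw [if_pos h2, if_pos h3, h1]
    · have h2 : ¬ (⟨z.1 * w0⁻¹, hC'mem z.1 z.2⟩ : {x // x ∈ C}) = x := by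
        intro hh
        apply h
        have := congrArg Subtype.val hh
        simp only at this
        rw [← this]
        group
      have h3 : ¬ z = (⟨x.1 * w0, hCmem' x.1 x.2⟩ : {y // y ∈ C'}) := by
        intro hh
        exact h (congrArg Subtype.val hh)
      rw [if_neg h2, if_neg h3, mul_zero, mul_zero]
  have hkey : ∀ i : B, (π' (cs.simple i)) ∘ₗ T = (-1 : ℝ) • (T ∘ₗ (π (cs.simple i))) := by
    intro i
    apply Module.Basis.ext (Pi.basisFun ℝ {x // x ∈ C})
    intro x
    rw [Pi.basisFun_apply]
    rw [LinearMap.comp_apply, LinearMap.smul_apply, LinearMap.comp_apply]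
    rw [hsingle x, map_smul, hπ' i, hπ i]
    have hsw0 : cs.simple i * w0 = w0 * cs.simple i := hw0c (cs.simple i)
    have hmulassoc : cs.simple i * (x.1 * w0) = (cs.simple i * x.1) * w0 :=
      (mul_assoc _ _ _).symm
    have hcommiff : (cs.simple i * (x.1 * w0) = (x.1 * w0) * cs.simple i)
        ↔ cs.simple i * x.1 = x.1 * cs.simple i := by
      have e1 : (x.1 * w0) * cs.simple i = (x.1 * cs.simple i) * w0 := by
        rw [mul_assoc, ← hsw0, ← mul_assoc]
      rw [hmulassoc, e1]
      constructor
      · intro h; exact mul_right_cancel h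
      · intro h; rw [h]
    have hlen : (cs.length (cs.simple i * (x.1 * w0)) < cs.length (x.1 * w0))
        ↔ ¬ (cs.length (cs.simple i * x.1) < cs.length x.1) := by
      rw [hmulassoc, hF1, hF1]
      have hd := cs.length_simple_mul x.1 i
      have h2 := hw0max x.1
      have h3 := hw0max (cs.simple i * x.1)
      omega
    by_cases hcm : cs.simple i * x.1 = x.1 * cs.simple i
    · by_cases hlt : cs.length (cs.simple i * x.1) < cs.length x.1
      · rw [if_neg (fun hh => (hlen.mp hh.2) hlt)]
        rw [if_pos ⟨hcm, hlt⟩]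
        have hval : cs.simple i * (x.1 * w0) * cs.simple i = x.1 * w0 := by
          rw [hmulassoc, mul_assoc, ← hsw0, ← mul_assoc, hcm,
            cs.simple_mul_simple_cancel_right]
        rw [map_neg, hsingle x]
        funext z
        simp only [Pi.smul_apply, Pi.neg_apply, Pi.single_apply, smul_eq_mul, Subtype.ext_iff]
        rw [hval]
        ring
      · rw [if_pos ⟨hcommiff.mpr hcm, hlen.mpr hlt⟩]
        rw [if_neg (fun hh => hlt hh.2)]
        have hval : cs.simple i * x.1 * cs.simple i = x.1 := by
          rw [hcm, cs.simple_mul_simple_cancel_right]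
        rw [hsingle]
        funext z
        simp only [Pi.smul_apply, Pi.neg_apply, Pi.single_apply, smul_eq_mul, Subtype.ext_iff]
        rw [hval]
        ring
    · rw [if_neg (fun hh => hcm (hcommiff.mp hh.1))]
      rw [if_neg (fun hh => hcm hh.1)]
      have hval : cs.simple i * (x.1 * w0) * cs.simple i
          = (cs.simple i * x.1 * cs.simple i) * w0 := by
        rw [hmulassoc, mul_assoc ((cs.simple i * x.1)) w0 (cs.simple i), ← hsw0, ← mul_assoc]
      have hsigns := hflip (cs.length x.1) (cs.length (cs.simple i * x.1 * cs.simple i))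
        (by
          rcases KottwitzAux.length_conj_involution cs x.1 (hCinv x.1 x.2) i hcm with h | h
          · exact Or.inr h
          · exact Or.inl h)
      rw [hsingle]
      funext z
      simp only [Pi.smul_apply, Pi.neg_apply, Pi.single_apply, smul_eq_mul, Subtype.ext_iff]
      rw [hval, hsigns]
      ring
  -- extend to all of W
  have hpow : ∀ u v : W, ((-1:ℝ)) ^ cs.length (u * v)
      = ((-1:ℝ)) ^ cs.length u * ((-1:ℝ)) ^ cs.length v := by
    intro u v
    have hmod : ∀ n : ℕ, ((-1:ℝ)) ^ n = ((-1:ℝ)) ^ (n % 2) := by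
      intro n
      conv_lhs => rw [← Nat.div_add_mod n 2]
      rw [pow_add, pow_mul, neg_one_sq, one_pow, one_mul]
    rw [hmod (cs.length (u*v)), cs.length_mul_mod_two, ← hmod, pow_add]
  have hmain : ∀ g : W, (π' g) ∘ₗ T = ((-1 : ℝ) ^ cs.length g) • (T ∘ₗ (π g)) := by
    intro g
    refine cs.simple_induction (p := fun g => (π' g) ∘ₗ T
      = ((-1 : ℝ) ^ cs.length g) • (T ∘ₗ (π g))) g ?_ ?_ ?_
    · intro i
      rw [hkey i, cs.length_simple, pow_one]
    · rw [map_one, map_one, cs.length_one, pow_zero, one_smul]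
      rfl
    · intro u v hu hv
      rw [map_mul, map_mul, hpow u v]
      have e1 : (π' u * π' v) ∘ₗ T = (π' u) ∘ₗ ((π' v) ∘ₗ T) := by
        rw [Module.End.mul_eq_comp, LinearMap.comp_assoc]
      rw [e1, hv, LinearMap.comp_smul, ← LinearMap.comp_assoc, hu, LinearMap.smul_comp,
        smul_smul, mul_comm ((-1:ℝ) ^ cs.length v) _, Module.End.mul_eq_comp,
        ← LinearMap.comp_assoc]
  -- conclude via traces
  intro g
  have h1 : π' g = ((π' g) ∘ₗ T) ∘ₗ S := by
    rw [LinearMap.comp_assoc, hTS]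
    rfl
  rw [h1, hmain g, LinearMap.smul_comp, map_smul, smul_eq_mul]
  congr 1
  rw [LinearMap.comp_assoc, LinearMap.trace_comp_comm']
  rw [LinearMap.comp_assoc, hST, LinearMap.comp_id]
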